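/- Unit vectors |ψ_1⟩,…,|ψ_n⟩ in a finite-dimensional complex Hilbert space are linearly independent if and only if there exist positive semidefinite operators E_1,…,E_n, E_? with E_1+⋯+E_n+E_? = I and tr(E_i |ψ_j⟩⟨ψ_j|) = 0 for all i ≠ j while tr(E_i |ψ_i⟩⟨ψ_i|) > 0 for all i. -/

import Mathlib

open ComplexOrder Matrix

def proj {d : ℕ} (v : Fin d → ℂ) : Matrix (Fin d) (Fin d) ℂ :=
  Matrix.of fun i j => v i * star (v j)

def IsUnitVec {d : ℕ} (v : Fin d → ℂ) : Prop := ∑ j, Complex.normSq (v j) = 1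

lemma trace_mul_proj {d : ℕ} (A : Matrix (Fin d) (Fin d) ℂ) (v : Fin d → ℂ) :
    (A * proj v).trace = star v ⬝ᵥ (A *ᵥ v) := by
  simp only [Matrix.trace, Matrix.diag, Matrix.mul_apply, proj, Matrix.of_apply,
    dotProduct, Matrix.mulVec, Pi.star_apply]
  congr 1; ext i
  rw [Finset.mul_sum]
  congr 1; ext k
  ring

lemma mulVec_proj {d : ℕ} (u x : Fin d → ℂ) :
    proj u *ᵥ x = fun i => u i * (star u ⬝ᵥ x) := by
  ext i
  simp only [Matrix.mulVec, proj, Matrix.of_apply, dotProduct, Pi.star_apply]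
  rw [Finset.mul_sum]
  congr 1; ext k; ring

lemma dot_star_eq {d : ℕ} (u x : Fin d → ℂ) :
    star x ⬝ᵥ u = star (star u ⬝ᵥ x) := by
  simp only [dotProduct, star_sum, Pi.star_apply, star_mul', star_star]
  congr 1; ext k; ring

lemma dot_proj {d : ℕ} (u x : Fin d → ℂ) :
    star x ⬝ᵥ (proj u *ᵥ x) = (Complex.normSq (star u ⬝ᵥ x) : ℂ) := by
  rw [mulVec_proj]
  have : star x ⬝ᵥ (fun i => u i * (star u ⬝ᵥ x)) = (star x ⬝ᵥ u) * (star u ⬝ᵥ x) := by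
    simp only [dotProduct, Finset.sum_mul]
    congr 1; ext k; ring
  rw [this, dot_star_eq, Complex.star_def, ← Complex.normSq_eq_conj_mul_self]

lemma dot_self_eq {d : ℕ} (x : Fin d → ℂ) :
    star x ⬝ᵥ x = ((∑ k, Complex.normSq (x k) : ℝ) : ℂ) := by
  push_cast
  simp only [dotProduct, Pi.star_apply]
  congr 1; ext k
  rw [Complex.star_def, ← Complex.normSq_eq_conj_mul_self]

lemma proj_posSemidef {d : ℕ} (v : Fin d → ℂ) : (proj v).PosSemidef := by
  refine Matrix.PosSemidef.of_dotProduct_mulVec_nonneg ?_ ?_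
  · ext i j
    simp [proj, Matrix.conjTranspose_apply, mul_comm]
  · intro x
    rw [dot_proj]
    exact_mod_cast Complex.normSq_nonneg _

lemma sum_mulVec' {d m : ℕ} (A : Fin m → Matrix (Fin d) (Fin d) ℂ) (x : Fin d → ℂ) :
    (∑ i, A i) *ᵥ x = ∑ i, A i *ᵥ x := by
  ext k
  simp only [Matrix.mulVec, dotProduct, Finset.sum_apply, Matrix.sum_apply,
    Finset.sum_mul]
  rw [Finset.sum_comm]

lemma dot_sum' {d m : ℕ} (v : Fin d → ℂ) (w : Fin m → Fin d → ℂ) :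
    v ⬝ᵥ (∑ i, w i) = ∑ i, v ⬝ᵥ w i := by
  simp only [dotProduct, Finset.sum_apply, Finset.mul_sum]
  rw [Finset.sum_comm]

lemma cs_ineq {d : ℕ} (u x : Fin d → ℂ) :
    Complex.normSq (star u ⬝ᵥ x) ≤
      (∑ k, Complex.normSq (u k)) * (∑ k, Complex.normSq (x k)) := by
  set u' : EuclideanSpace ℂ (Fin d) := (WithLp.equiv 2 _).symm u with hu'
  set x' : EuclideanSpace ℂ (Fin d) := (WithLp.equiv 2 _).symm x with hx'
  have hin : (inner ℂ u' x' : ℂ) = star u ⬝ᵥ x := by rw [dotProduct_comm]; rfl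
  have h := norm_inner_le_norm (𝕜 := ℂ) u' x'
  have hu : ‖u'‖ ^ 2 = ∑ k, Complex.normSq (u k) := by
    rw [EuclideanSpace.norm_eq, Real.sq_sqrt (by positivity)]
    congr 1; ext k
    rw [Complex.sq_norm]; rfl
  have hx : ‖x'‖ ^ 2 = ∑ k, Complex.normSq (x k) := by
    rw [EuclideanSpace.norm_eq, Real.sq_sqrt (by positivity)]
    congr 1; ext k
    rw [Complex.sq_norm]; rfl
  have hns : Complex.normSq (star u ⬝ᵥ x) = ‖(inner ℂ u' x' : ℂ)‖ ^ 2 := by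
    rw [hin, Complex.sq_norm]
  rw [hns, ← hu, ← hx]
  nlinarith [norm_nonneg u', norm_nonneg x', norm_nonneg (inner ℂ u' x' : ℂ)]

lemma exists_dual {d n : ℕ} {ψ : Fin n → Fin d → ℂ} (h : LinearIndependent ℂ ψ) :
    ∃ φ : Fin n → Fin d → ℂ,
      ∀ i j, star (φ i) ⬝ᵥ ψ j = if i = j then 1 else 0 := by
  classical
  let b := Module.Basis.span h
  choose g hg using fun i => LinearMap.exists_extend (b.coord i)
  refine ⟨fun i => star fun k => g i (fun j' => if k = j' then 1 else 0), fun i j => ?_⟩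
  have h1 : star (star fun k => g i (fun j' => if k = j' then (1:ℂ) else 0)) ⬝ᵥ ψ j
      = g i (ψ j) := by
    rw [star_star]
    conv_rhs => rw [pi_eq_sum_univ (ψ j)]
    rw [map_sum]
    simp only [_root_.map_smul, smul_eq_mul, dotProduct]
    congr 1; ext k
    ring
  rw [h1]
  have h2 : ψ j = (Submodule.span ℂ (Set.range ψ)).subtype (b j) := by
    rw [Submodule.subtype_apply, Module.Basis.span_apply]
  rw [h2, ← LinearMap.comp_apply, hg i, Module.Basis.coord_apply, Module.Basis.repr_self]
  by_cases hij : i = j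
  · subst hij; simp
  · simp [Finsupp.single_apply, hij, Ne.symm hij]

/-- Unit vectors are linearly independent iff they admit an unambiguous-discrimination POVM. -/
theorem stmt14 {d n : ℕ}
    (ψ : Fin n → (Fin d → ℂ)) (hψ : ∀ i, IsUnitVec (ψ i)) :
    LinearIndependent ℂ ψ ↔
      ∃ (E : Fin n → Matrix (Fin d) (Fin d) ℂ) (Eq : Matrix (Fin d) (Fin d) ℂ),
        (∀ i, (E i).PosSemidef) ∧ Eq.PosSemidef ∧
        (∑ i, E i) + Eq = (1 : Matrix (Fin d) (Fin d) ℂ) ∧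
        (∀ i j, i ≠ j → (E i * proj (ψ j)).trace = 0) ∧
        (∀ i, 0 < ((E i * proj (ψ i)).trace).re) := by
  constructor
  · intro hLI
    obtain ⟨φ, hφ⟩ := exists_dual hLI
    set N : ℝ := ∑ i, ∑ k, Complex.normSq (φ i k) with hNdef
    have hN : 0 ≤ N := Finset.sum_nonneg fun i _ => Finset.sum_nonneg fun k _ => Complex.normSq_nonneg _
    set c : ℝ := (1 + N)⁻¹ with hcdef
    have h1N : (0:ℝ) < 1 + N := by linarith
    have hc : 0 < c := by rw [hcdef]; exact inv_pos.mpr h1N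
    have hcN : c * (1 + N) = 1 := inv_mul_cancel₀ (ne_of_gt h1N)
    refine ⟨fun i => (c : ℂ) • proj (φ i), 1 - ∑ i, (c : ℂ) • proj (φ i), ?_, ?_, ?_, ?_, ?_⟩
    · intro i
      refine Matrix.PosSemidef.of_dotProduct_mulVec_nonneg ?_ ?_
      · unfold Matrix.IsHermitian
        rw [Matrix.conjTranspose_smul, (proj_posSemidef (φ i)).1]
        congr 1
        simp [Complex.star_def, Complex.conj_ofReal]
      · intro x
        rw [Matrix.smul_mulVec, dotProduct_smul, dot_proj]
        rw [smul_eq_mul]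
        have : ((c : ℂ)) * (Complex.normSq (star (φ i) ⬝ᵥ x) : ℂ)
            = ((c * Complex.normSq (star (φ i) ⬝ᵥ x) : ℝ) : ℂ) := by push_cast; ring
        rw [this]
        rw [Complex.zero_le_real]
        exact mul_nonneg hc.le (Complex.normSq_nonneg _)
    · refine Matrix.PosSemidef.of_dotProduct_mulVec_nonneg ?_ ?_
      · unfold Matrix.IsHermitian
        rw [Matrix.conjTranspose_sub, Matrix.conjTranspose_one, Matrix.conjTranspose_sum]
        congr 1
        apply Finset.sum_congr rfl
        intro i _
        rw [Matrix.conjTranspose_smul, (proj_posSemidef (φ i)).1]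
        congr 1
        simp [Complex.star_def, Complex.conj_ofReal]
      · intro x
        rw [Matrix.sub_mulVec, Matrix.one_mulVec, dotProduct_sub]
        have hsum : (∑ i, (c : ℂ) • proj (φ i)) *ᵥ x = ∑ i, (c:ℂ) • (proj (φ i) *ᵥ x) := by
          rw [sum_mulVec']
          exact Finset.sum_congr rfl fun i _ => Matrix.smul_mulVec _ _ _
        rw [hsum, dot_sum']
        simp only [dotProduct_smul, smul_eq_mul, dot_proj, dot_self_eq]
        set X : ℝ := ∑ k, Complex.normSq (x k) with hXdef
        have hX : 0 ≤ X := Finset.sum_nonneg fun k _ => Complex.normSq_nonneg _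
        have heq : ((X:ℂ)) - ∑ i, (c:ℂ) * (Complex.normSq (star (φ i) ⬝ᵥ x) : ℂ)
            = ((X - ∑ i, c * Complex.normSq (star (φ i) ⬝ᵥ x) : ℝ) : ℂ) := by
          push_cast; ring
        rw [heq, Complex.zero_le_real]
        have hbound : ∑ i, Complex.normSq (star (φ i) ⬝ᵥ x) ≤ N * X := by
          rw [hNdef, Finset.sum_mul]
          exact Finset.sum_le_sum fun i _ => cs_ineq (φ i) x
        have : ∑ i, c * Complex.normSq (star (φ i) ⬝ᵥ x)
            = c * ∑ i, Complex.normSq (star (φ i) ⬝ᵥ x) := by rw [Finset.mul_sum]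
        rw [this]
        nlinarith [hc.le]
    · abel
    · intro i j hij
      rw [trace_mul_proj, Matrix.smul_mulVec, dotProduct_smul, dot_proj,
        hφ i j, if_neg hij]
      simp
    · intro i
      rw [trace_mul_proj, Matrix.smul_mulVec, dotProduct_smul, dot_proj,
        hφ i i, if_pos rfl]
      simp only [Complex.normSq_one, Complex.ofReal_one, smul_eq_mul, mul_one]
      simpa using hc
  · rintro ⟨E, Eq, hE, _, _, hzero, hpos⟩
    rw [Fintype.linearIndependent_iff]
    intro g hg i
    have h1 : ∀ j, j ≠ i → E i *ᵥ ψ j = 0 := by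
      intro j hj
      have := hzero i j (Ne.symm hj)
      rw [trace_mul_proj] at this
      exact ((hE i).dotProduct_mulVec_zero_iff (ψ j)).mp this
    have h2 : E i *ᵥ (∑ j, g j • ψ j) = 0 := by rw [hg, Matrix.mulVec_zero]
    have h3 : E i *ᵥ (∑ j, g j • ψ j) = g i • (E i *ᵥ ψ i) := by
      have : E i *ᵥ (∑ j, g j • ψ j) = ∑ j, g j • (E i *ᵥ ψ j) := by
        rw [show ∀ y, E i *ᵥ y = (Matrix.mulVecLin (E i)) y from fun y => rfl, map_sum]
        exact Finset.sum_congr rfl fun j _ => map_smul _ _ _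
      rw [this, Finset.sum_eq_single i (fun j _ hj => by rw [h1 j hj, smul_zero])
        (fun h => absurd (Finset.mem_univ i) h)]
    have h4 : E i *ᵥ ψ i ≠ 0 := by
      intro hcon
      have := hpos i
      rw [trace_mul_proj, hcon, dotProduct_zero] at this
      simp at this
    have := h2 ▸ h3
    rcases smul_eq_zero.mp this.symm with h | h
    · exact h
    · exact absurd h h4
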